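/- Let k be a field, A and B two finite-dimensional k-algebras, and {M_n : n ∈ ℕ} a set of finite-dimensional A-modules that is not hyperfinite. Suppose there exist constants K₁, K₂ > 0 and additive functors F from finite-dimensional A-modules to finite-dimensional B-modules and G from finite-dimensional B-modules to finite-dimensional A-modules such that: G(F(M_n)) ≅ M_n for all n ∈ ℕ; G is left exact; K₁·dim_k F(M_n) ≤ dim_k G(F(M_n)) for all n ∈ ℕ; and dim_k G(X) ≤ K₂·dim_k X for all finite-dimensional B-modules X. Then the set {F(M_n) : n ∈ ℕ} of B-modules is not hyperfinite. -/

import Mathlib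

/-!
Hyperfiniteness for families of finite-dimensional modules over a
finite-dimensional algebra `A` over a field `k`, following Elek.

A finite-dimensional `A`-module is bundled as a type together with an
`A`-module structure, a compatible `k`-vector space structure, which is
finite-dimensional over `k`.
-/

universe u

structure FdModule (k A : Type u) [Field k] [Ring A] [Algebra k A] : Type (u+1) where
  carrier : Type u
  [acg : AddCommGroup carrier]
  [modA : Module A carrier]
  [modk : Module k carrier]
  [tower : IsScalarTower k A carrier]
  [fd : FiniteDimensional k carrier]

attribute [instance] FdModule.acg FdModule.modA FdModule.modk FdModule.tower FdModule.fd

variable {k A : Type u} [Field k] [Ring A] [Algebra k A]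

/-- The `k`-dimension of a finite-dimensional `A`-module. -/
noncomputable def FdModule.dim (M : FdModule k A) : ℕ := Module.finrank k M.carrier

/-- A set `𝓜` of finite-dimensional `A`-modules is *hyperfinite* if for every `ε > 0`
there is `L_ε > 0` such that every `M ∈ 𝓜` has an `A`-submodule `P` with
`dim_k P ≥ (1 - ε) · dim_k M` which is isomorphic to a finite direct sum of modules of
`k`-dimension at most `L_ε`; equivalently, `P` is the internal direct sum of finitely
many submodules `N j` of `k`-dimension at most `L_ε`. -/
def Hyperfinite (𝓜 : Set (FdModule k A)) : Prop :=
  ∀ ε : ℝ, 0 < ε → ∃ L : ℕ, 0 < L ∧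
    ∀ M ∈ 𝓜, ∃ P : Submodule A M.carrier,
      (1 - ε) * (M.dim : ℝ) ≤ (Module.finrank k P : ℝ) ∧
      ∃ (t : ℕ) (N : Fin t → Submodule A M.carrier),
        (∀ j, Module.finrank k (N j) ≤ L) ∧
        iSupIndep N ∧ (⨆ j, N j) = P

section Functors

variable (k A B : Type u) [Field k] [Ring A] [Algebra k A] [Ring B] [Algebra k B]

/-- An additive functor from finite-dimensional `A`-modules to finite-dimensional
`B`-modules. -/
structure FdFunctor where
  obj : FdModule k A → FdModule k B
  map : ∀ {M N : FdModule k A}, (M.carrier →ₗ[A] N.carrier) →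
    ((obj M).carrier →ₗ[B] (obj N).carrier)
  map_id : ∀ M : FdModule k A, map (LinearMap.id (M := M.carrier)) = LinearMap.id
  map_comp : ∀ {M N P : FdModule k A} (f : M.carrier →ₗ[A] N.carrier)
    (g : N.carrier →ₗ[A] P.carrier), map (g ∘ₗ f) = map g ∘ₗ map f
  map_add : ∀ {M N : FdModule k A} (f g : M.carrier →ₗ[A] N.carrier),
    map (f + g) = map f + map g

variable {k A B}

/-- A functor is left exact if it preserves kernels: it maps any exact sequence
`0 → X → Y → Z` to an exact sequence `0 → F X → F Y → F Z`. -/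
def FdFunctor.LeftExact (F : FdFunctor k A B) : Prop :=
  ∀ {X Y Z : FdModule k A} (f : X.carrier →ₗ[A] Y.carrier) (g : Y.carrier →ₗ[A] Z.carrier),
    Function.Injective f → LinearMap.range f = LinearMap.ker g →
    Function.Injective (F.map f) ∧ LinearMap.range (F.map f) = LinearMap.ker (F.map g)

end Functors


/-! ### Auxiliary lemmas -/

section Helpers

open Module

section Indep
variable {R M M₂ : Type u} [Ring R] [AddCommGroup M] [AddCommGroup M₂] [Module R M] [Module R M₂]

lemma iSupIndep_map_of_injective (u : M →ₗ[R] M₂) (hu : Function.Injective u)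
    {ι : Type*} {T : ι → Submodule R M} (hT : iSupIndep T) :
    iSupIndep fun i => (T i).map u := by
  intro i
  rw [disjoint_iff]
  have : (⨆ j, ⨆ (_ : j ≠ i), (T j).map u) = ((⨆ j, ⨆ (_ : j ≠ i), T j)).map u := by
    simp [Submodule.map_iSup]
  rw [this, ← Submodule.map_inf u hu, disjoint_iff.mp (hT i), Submodule.map_bot]

lemma iSupIndep_of_map_injective (u : M →ₗ[R] M₂) (hu : Function.Injective u)
    {ι : Type*} {T : ι → Submodule R M} (hT : iSupIndep fun i => (T i).map u) :
    iSupIndep T := by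
  intro i
  have key : (⨆ j, ⨆ (_ : j ≠ i), (T j).map u) = ((⨆ j, ⨆ (_ : j ≠ i), T j)).map u := by
    simp [Submodule.map_iSup]
  rw [disjoint_iff]
  apply Submodule.map_injective_of_injective hu
  rw [Submodule.map_bot, Submodule.map_inf u hu, ← key]
  exact disjoint_iff.mp (hT i)
end Indep

section Finrank
variable {k A V W : Type u} [Field k] [Ring A] [Algebra k A]
  [AddCommGroup V] [Module A V] [Module k V] [IsScalarTower k A V] [FiniteDimensional k V]
  [AddCommGroup W] [Module A W] [Module k W] [IsScalarTower k A W] [FiniteDimensional k W]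

omit [FiniteDimensional k V] [FiniteDimensional k W] in
lemma frk_restrict (p : Submodule A V) : finrank k ↥(p.restrictScalars k) = finrank k ↥p := rfl

lemma frk_mono {p q : Submodule A V} (h : p ≤ q) : finrank k ↥p ≤ finrank k ↥q := by
  rw [← frk_restrict (k := k) p, ← frk_restrict (k := k) q]
  exact Submodule.finrank_mono h

lemma frk_map_le (u : V →ₗ[A] W) (p : Submodule A V) :
    finrank k ↥(p.map u) ≤ finrank k ↥p := by
  have h : (p.map u).restrictScalars k
      = (p.restrictScalars k).map (u.restrictScalars k) := by
    ext x; simp [Submodule.mem_map]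
  rw [← frk_restrict (k := k) (p.map u), h, ← frk_restrict (k := k) p]
  exact Submodule.finrank_map_le _ _

omit [FiniteDimensional k V] in
lemma frk_range_of_inj {u : V →ₗ[A] W} (hu : Function.Injective u) :
    finrank k ↥(LinearMap.range u) = finrank k V := by
  have h : (LinearMap.range u).restrictScalars k = LinearMap.range (u.restrictScalars k) := by
    ext x; simp
  rw [← frk_restrict (k := k), h]
  exact LinearMap.finrank_range_of_inj hu

lemma frk_range_le (u : V →ₗ[A] W) : finrank k ↥(LinearMap.range u) ≤ finrank k V := by
  have h : (LinearMap.range u).restrictScalars k = LinearMap.range (u.restrictScalars k) := by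
    ext x; simp
  rw [← frk_restrict (k := k), h]
  exact LinearMap.finrank_range_le _

lemma frk_ker_ge (u : V →ₗ[A] W) :
    finrank k V - finrank k W ≤ finrank k ↥(LinearMap.ker u) := by
  have h : (LinearMap.ker u).restrictScalars k = LinearMap.ker (u.restrictScalars k) := by
    ext x; simp
  rw [← frk_restrict (k := k), h]
  have h2 := LinearMap.finrank_range_add_finrank_ker (u.restrictScalars k)
  have h3 : finrank k ↥(LinearMap.range (u.restrictScalars k)) ≤ finrank k W :=
    (LinearMap.range (u.restrictScalars k)).finrank_le
  omega

omit [FiniteDimensional k V] [FiniteDimensional k W] in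
lemma frk_equiv (e : V ≃ₗ[A] W) : finrank k V = finrank k W :=
  (e.restrictScalars k).finrank_eq

omit [FiniteDimensional k V] [FiniteDimensional k W] in
lemma frk_map_equiv (e : V ≃ₗ[A] W) (p : Submodule A V) :
    finrank k ↥(p.map (e : V →ₗ[A] W)) = finrank k ↥p := by
  have := (p.equivMapOfInjective (e : V →ₗ[A] W) e.injective).restrictScalars k
  exact this.symm.finrank_eq
end Finrank

section Proj
open DirectSum
variable {B V : Type u} [Ring B] [AddCommGroup V] [Module B V]

/-- From an internal direct sum decomposition of `P` into `N j ≤ P`, construct a system of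
"projections" `f j` on `P` summing to the identity, pairwise orthogonal, each factoring
through `N j`. -/
lemma exists_projections (P : Submodule B V) {t : ℕ} (N : Fin t → Submodule B V)
    (hNP : ∀ j, N j ≤ P) (hind : iSupIndep N) (hsup : (⨆ j, N j) = P) :
    ∃ (f : Fin t → (↥P →ₗ[B] ↥P)) (ρ : ∀ j, ↥P →ₗ[B] ↥(N j)),
      (∑ j, f j) = LinearMap.id ∧
      (∀ i j, i ≠ j → f j ∘ₗ f i = 0) ∧
      (∀ j, f j = Submodule.inclusion (hNP j) ∘ₗ ρ j) := by
  classical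
  set N' : Fin t → Submodule B ↥P := fun j => (N j).comap P.subtype with hN'
  have hmap : ∀ j, (N' j).map P.subtype = N j := by
    intro j
    rw [Submodule.map_comap_subtype, inf_eq_right.mpr (hNP j)]
  have hinj : Function.Injective P.subtype := P.injective_subtype
  have hind' : iSupIndep N' := by
    apply iSupIndep_of_map_injective P.subtype hinj
    simpa only [hmap] using hind
  have hsup' : (⨆ j, N' j) = ⊤ := by
    apply Submodule.map_injective_of_injective hinj
    rw [Submodule.map_iSup]
    simp only [hmap, hsup, Submodule.map_top, Submodule.range_subtype]
  have internal : DirectSum.IsInternal N' :=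
    (isInternal_submodule_iff_iSupIndep_and_iSup_eq_top N').mpr ⟨hind', hsup'⟩
  set φ : (⨁ j, ↥(N' j)) →ₗ[B] ↥P := DirectSum.coeLinearMap N' with hφ
  set e : (⨁ j, ↥(N' j)) ≃ₗ[B] ↥P := LinearEquiv.ofBijective φ internal with he
  set χ : ∀ j, ↥(N' j) →ₗ[B] ↥(N j) := fun j =>
    LinearMap.codRestrict (N j) (P.subtype.comp (N' j).subtype) (fun x => x.2) with hχ
  set ρ : ∀ j, ↥P →ₗ[B] ↥(N j) := fun j =>
    (χ j).comp ((DirectSum.component B (Fin t) (fun j => ↥(N' j)) j).comp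
      e.symm.toLinearMap) with hρ
  set f : Fin t → (↥P →ₗ[B] ↥P) := fun j => Submodule.inclusion (hNP j) ∘ₗ ρ j with hf
  have hfx : ∀ (j) (x : ↥P), f j x = ((e.symm x) j : ↥P) := by
    intro j x
    apply Subtype.ext
    simp only [hf, hρ, hχ, LinearMap.comp_apply, Submodule.coe_inclusion,
      LinearMap.codRestrict_apply, Submodule.coe_subtype, LinearEquiv.coe_coe]
    rfl
  refine ⟨f, ρ, ?_, ?_, fun j => rfl⟩
  · refine LinearMap.ext fun x => ?_
    have : (∑ j, f j) x = ∑ j, ((e.symm x) j : ↥P) := by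
      rw [LinearMap.sum_apply]
      exact Finset.sum_congr rfl fun j _ => hfx j x
    rw [LinearMap.id_apply, this]
    have h2 : ∑ j, ((e.symm x) j : ↥P) = φ (e.symm x) := by
      rw [← DirectSum.sum_univ_of (e.symm x), map_sum]
      simp [hφ, DirectSum.coeLinearMap_of, DirectSum.sum_univ_of]
    rw [h2]
    exact e.apply_symm_apply x
  · intro i j hij
    refine LinearMap.ext fun x => ?_
    have hs : e.symm (((e.symm x) i : ↥P)) = DirectSum.of (fun j => ↥(N' j)) i ((e.symm x) i) := by
      rw [LinearEquiv.symm_apply_eq]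
      exact (DirectSum.coeLinearMap_of N' i _).symm
    show f j (f i x) = 0
    rw [hfx j (f i x), hfx i x, hs, DirectSum.of_eq_of_ne _ _ _ hij.symm]
    simp
end Proj

section FunctorLemmas

variable {k A B : Type u} [Field k] [Ring A] [Algebra k A] [Ring B] [Algebra k B]

lemma FdFunctor.map_zero' (F : FdFunctor k A B) {M N : FdModule k A} :
    F.map (0 : M.carrier →ₗ[A] N.carrier) = 0 := by
  have h := F.map_add (0 : M.carrier →ₗ[A] N.carrier) 0
  rw [add_zero] at h
  exact left_eq_add.mp h

lemma FdFunctor.map_sum' (F : FdFunctor k A B) {M N : FdModule k A} {ι : Type*}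
    (s : Finset ι) (f : ι → (M.carrier →ₗ[A] N.carrier)) :
    F.map (∑ i ∈ s, f i) = ∑ i ∈ s, F.map (f i) := by
  classical
  induction s using Finset.induction with
  | empty => simpa using F.map_zero'
  | insert _ _ hnotmem ih =>
      rw [Finset.sum_insert hnotmem, Finset.sum_insert hnotmem, F.map_add, ih]

end FunctorLemmas

section Key

open Module

variable {k A B : Type u} [Field k] [Ring A] [Algebra k A] [Ring B] [Algebra k B]

/-- The sub-FdModule attached to a submodule. -/
def FdModule.sub (X : FdModule k B) (P : Submodule B X.carrier) : FdModule k B where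
  carrier := ↥P
  fd := FiniteDimensional.of_injective ((P.subtype).restrictScalars k) Subtype.val_injective

/-- The quotient FdModule attached to a submodule. -/
def FdModule.quot (X : FdModule k B) (P : Submodule B X.carrier) : FdModule k B where
  carrier := X.carrier ⧸ P
  fd := Module.Finite.of_surjective ((P.mkQ).restrictScalars k) (Submodule.mkQ_surjective P)

/-- Key construction: transporting a decomposition of `P ⊆ X` along a left exact functor `G`. -/
lemma key_lemma (G : FdFunctor k B A) (hG : G.LeftExact) (X : FdModule k B)
    (P : Submodule B X.carrier) {t : ℕ} (N : Fin t → Submodule B X.carrier)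
    (hind : iSupIndep N) (hsup : (⨆ j, N j) = P) :
    ∃ Q : Fin t → Submodule A (G.obj X).carrier,
      iSupIndep Q ∧
      (∀ j, finrank k ↥(Q j) ≤ (G.obj (X.sub (N j))).dim) ∧
      (G.obj X).dim ≤ finrank k ↥(⨆ j, Q j) + (G.obj (X.quot P)).dim := by
  classical
  have hNP : ∀ j, N j ≤ P := fun j => hsup ▸ le_iSup N j
  obtain ⟨f, ρ, hsum, horth, hfact⟩ := exists_projections P N hNP hind hsup
  -- the inclusion and quotient morphisms
  set ι : (X.sub P).carrier →ₗ[B] X.carrier := P.subtype with hι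
  set π : X.carrier →ₗ[B] (X.quot P).carrier := P.mkQ with hπ
  obtain ⟨hu_inj, hu_range⟩ := hG ι π P.injective_subtype
    (by rw [hι, hπ]; exact (Submodule.range_subtype P).trans (Submodule.ker_mkQ P).symm)
  set u : (G.obj (X.sub P)).carrier →ₗ[A] (G.obj X).carrier := G.map ι with hu
  set E : Fin t → ((G.obj (X.sub P)).carrier →ₗ[A] (G.obj (X.sub P)).carrier) :=
    fun j => G.map (f j) with hE
  have hEsum : (∑ j, E j) = LinearMap.id := by
    have h1 : G.map (M := X.sub P) (N := X.sub P) (∑ j, f j) = ∑ j, E j := G.map_sum' _ _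
    exact h1.symm.trans ((congrArg (G.map (M := X.sub P) (N := X.sub P)) hsum).trans (G.map_id _))
  have hEcomp : ∀ i j, i ≠ j → E j ∘ₗ E i = 0 := by
    intro i j hij
    exact (G.map_comp (M := X.sub P) (N := X.sub P) (P := X.sub P) (f i) (f j)).symm.trans
      ((congrArg (G.map (M := X.sub P) (N := X.sub P)) (horth i j hij)).trans G.map_zero')
  have hEidem : ∀ j (x : (G.obj (X.sub P)).carrier), E j (E j x) = E j x := by
    intro j x
    have hx : ∑ i, E i x = x := by
      rw [← LinearMap.sum_apply, hEsum, LinearMap.id_apply]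
    conv_rhs => rw [← hx]
    rw [map_sum]
    rw [Finset.sum_eq_single j]
    · intro i _ hij
      have := hEcomp i j hij
      exact LinearMap.congr_fun this x
    · intro h; exact absurd (Finset.mem_univ j) h
  set R : Fin t → Submodule A (G.obj (X.sub P)).carrier :=
    fun j => LinearMap.range (E j) with hR
  have hRind : iSupIndep R := by
    intro j
    have hker : (⨆ i, ⨆ (_ : i ≠ j), R i) ≤ LinearMap.ker (E j) := by
      refine iSup₂_le fun i hij => ?_
      rw [hR, LinearMap.range_le_ker_iff]
      exact hEcomp i j hij
    refine Disjoint.mono_right hker ?_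
    rw [disjoint_iff, Submodule.eq_bot_iff]
    rintro x hx
    rw [Submodule.mem_inf] at hx
    obtain ⟨⟨y, rfl⟩, hx2⟩ := hx
    rw [LinearMap.mem_ker] at hx2
    rw [← hEidem j y, hx2]
  have hRsup : (⨆ j, R j) = ⊤ := by
    rw [eq_top_iff]
    intro x _
    have hx : ∑ i, E i x = x := by
      rw [← LinearMap.sum_apply, hEsum, LinearMap.id_apply]
    rw [← hx]
    refine Submodule.sum_mem _ fun i _ => ?_
    exact Submodule.mem_iSup_of_mem i ⟨x, rfl⟩
  refine ⟨fun j => (R j).map u, iSupIndep_map_of_injective u hu_inj hRind, ?_, ?_⟩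
  · intro j
    have h1 : finrank k ↥((R j).map u) ≤ finrank k ↥(R j) := frk_map_le u (R j)
    have hcomp := G.map_comp (M := X.sub P) (N := X.sub (N j)) (P := X.sub P)
      (ρ j) (Submodule.inclusion (hNP j))
    have hEj : E j = G.map (M := X.sub (N j)) (N := X.sub P) (Submodule.inclusion (hNP j))
        ∘ₗ G.map (M := X.sub P) (N := X.sub (N j)) (ρ j) := by
      have hfj : E j = G.map (f j) := rfl
      rw [hfj, hfact j]
      exact hcomp
    have h2 : R j ≤ LinearMap.range
        (G.map (M := X.sub (N j)) (N := X.sub P) (Submodule.inclusion (hNP j))) := by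
      show LinearMap.range (E j) ≤ _
      rw [hEj]
      exact LinearMap.range_comp_le_range _ _
    have h3 := frk_mono (k := k) h2
    have h4 : finrank k ↥(LinearMap.range
        (G.map (M := X.sub (N j)) (N := X.sub P) (Submodule.inclusion (hNP j))))
        ≤ finrank k (G.obj (X.sub (N j))).carrier := frk_range_le _
    exact le_trans h1 (le_trans h3 h4)
  · have hmapsup : (⨆ j, (R j).map u) = LinearMap.range u := by
      rw [← Submodule.map_iSup, hRsup, Submodule.map_top]
    have h5 : finrank k (G.obj (X.sub P)).carrier = finrank k ↥(LinearMap.ker (G.map π)) := by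
      rw [← hu_range]
      exact (frk_range_of_inj (k := k) hu_inj).symm
    have h6 := frk_ker_ge (k := k) (G.map (M := X) (N := X.quot P) π)
    show finrank k (G.obj X).carrier ≤
      finrank k ↥(⨆ j, (R j).map u) + finrank k (G.obj (X.quot P)).carrier
    rw [hmapsup, frk_range_of_inj (k := k) hu_inj, h5]
    omega

end Key

/-- transporting non-hyperfiniteness along a pair of additive functors.
If `{M n}` is not hyperfinite, `G ∘ F` fixes each `M n` up to isomorphism, `G` is left
exact, `K₁ · dim F(M n) ≤ dim G(F(M n))` and `dim G(X) ≤ K₂ · dim X` for all `X`, then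
`{F (M n)}` is not hyperfinite. -/
theorem stmt_16 {k A B : Type u} [Field k] [Ring A] [Algebra k A] [Ring B] [Algebra k B]
    [FiniteDimensional k A] [FiniteDimensional k B]
    (M : ℕ → FdModule k A) (hM : ¬ Hyperfinite (Set.range M))
    (F : FdFunctor k A B) (G : FdFunctor k B A)
    (K₁ K₂ : ℝ) (hK₁ : 0 < K₁) (hK₂ : 0 < K₂)
    (hGF : ∀ n : ℕ, Nonempty ((G.obj (F.obj (M n))).carrier ≃ₗ[A] (M n).carrier))
    (hG : G.LeftExact)
    (h₁ : ∀ n : ℕ, K₁ * ((F.obj (M n)).dim : ℝ) ≤ ((G.obj (F.obj (M n))).dim : ℝ))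
    (h₂ : ∀ X : FdModule k B, ((G.obj X).dim : ℝ) ≤ K₂ * (X.dim : ℝ)) :
    ¬ Hyperfinite (Set.range fun n => F.obj (M n)) := by
  intro hF
  apply hM
  intro ε hε
  classical
  have hδ : 0 < K₁ * ε / K₂ := by positivity
  obtain ⟨L, hL, hALL⟩ := hF (K₁ * ε / K₂) hδ
  refine ⟨max 1 ⌈K₂ * (L : ℝ)⌉₊, lt_of_lt_of_le one_pos (le_max_left _ _), ?_⟩
  rintro Mn ⟨n, rfl⟩
  obtain ⟨P, hP, t, N, hNL, hind, hsup⟩ := hALL (F.obj (M n)) ⟨n, rfl⟩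
  obtain ⟨Q, hQind, hQbound, hQdim⟩ := key_lemma G hG (F.obj (M n)) P N hind hsup
  obtain ⟨e⟩ := hGF n
  refine ⟨⨆ j, (Q j).map (e : (G.obj (F.obj (M n))).carrier →ₗ[A] (M n).carrier), ?_, t,
    fun j => (Q j).map (e : (G.obj (F.obj (M n))).carrier →ₗ[A] (M n).carrier), ?_,
    iSupIndep_map_of_injective _ e.injective hQind, rfl⟩
  · -- dimension estimate
    have hfr : Module.finrank k
        ↥(⨆ j, (Q j).map (e : (G.obj (F.obj (M n))).carrier →ₗ[A] (M n).carrier))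
        = Module.finrank k ↥(⨆ j, Q j) := by
      rw [← Submodule.map_iSup]
      exact frk_map_equiv e _
    rw [hfr]
    have hMY : ((M n).dim : ℝ) = ((G.obj (F.obj (M n))).dim : ℝ) := by
      exact_mod_cast (frk_equiv (k := k) e).symm
    have hquot : ((G.obj ((F.obj (M n)).quot P)).dim : ℝ)
        ≤ K₂ * (((F.obj (M n)).quot P).dim : ℝ) := h₂ _
    have hq : ((((F.obj (M n)).quot P)).dim : ℝ)
        ≤ (K₁ * ε / K₂) * ((F.obj (M n)).dim : ℝ) := by
      have hqn : ((F.obj (M n)).quot P).dim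
          = (F.obj (M n)).dim - Module.finrank k ↥P :=
        Submodule.finrank_quotient (R := k) P
      have hPle : Module.finrank k ↥P ≤ (F.obj (M n)).dim :=
        (P.restrictScalars k).finrank_le
      have hcast : (((F.obj (M n)).quot P).dim : ℝ)
          = ((F.obj (M n)).dim : ℝ) - (Module.finrank k ↥P : ℝ) := by
        rw [hqn, Nat.cast_sub hPle]
      rw [hcast]
      linarith [hP]
    have hXY : ((F.obj (M n)).dim : ℝ) ≤ ((G.obj (F.obj (M n))).dim : ℝ) / K₁ := by
      rw [le_div_iff₀ hK₁]
      linarith [h₁ n]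
    have hYQ : ((G.obj (F.obj (M n))).dim : ℝ) ≤ (Module.finrank k ↥(⨆ j, Q j) : ℝ)
        + ((G.obj ((F.obj (M n)).quot P)).dim : ℝ) := by
      exact_mod_cast hQdim
    have hkey : ((G.obj ((F.obj (M n)).quot P)).dim : ℝ)
        ≤ ε * ((G.obj (F.obj (M n))).dim : ℝ) := by
      calc ((G.obj ((F.obj (M n)).quot P)).dim : ℝ)
          ≤ K₂ * (((F.obj (M n)).quot P).dim : ℝ) := hquot
        _ ≤ K₂ * ((K₁ * ε / K₂) * ((F.obj (M n)).dim : ℝ)) :=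
            mul_le_mul_of_nonneg_left hq (le_of_lt hK₂)
        _ = K₁ * ε * ((F.obj (M n)).dim : ℝ) := by field_simp
        _ ≤ K₁ * ε * (((G.obj (F.obj (M n))).dim : ℝ) / K₁) := by
            apply mul_le_mul_of_nonneg_left hXY
            positivity
        _ = ε * ((G.obj (F.obj (M n))).dim : ℝ) := by field_simp
    rw [hMY]
    linarith [hYQ, hkey]
  · -- size bound
    intro j
    have h1 : Module.finrank k
        ↥((Q j).map (e : (G.obj (F.obj (M n))).carrier →ₗ[A] (M n).carrier))
        = Module.finrank k ↥(Q j) := frk_map_equiv e _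
    have h2 : (Module.finrank k ↥(Q j) : ℝ) ≤ K₂ * (L : ℝ) := by
      have hsubdim : (((F.obj (M n)).sub (N j)).dim : ℝ) ≤ (L : ℝ) := by
        exact_mod_cast hNL j
      have hGsub : ((G.obj ((F.obj (M n)).sub (N j))).dim : ℝ) ≤ K₂ * (L : ℝ) :=
        le_trans (h₂ _) (mul_le_mul_of_nonneg_left hsubdim (le_of_lt hK₂))
      calc (Module.finrank k ↥(Q j) : ℝ)
          ≤ ((G.obj ((F.obj (M n)).sub (N j))).dim : ℝ) := by exact_mod_cast hQbound j
        _ ≤ K₂ * (L : ℝ) := hGsub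
    have h3 : (Module.finrank k ↥(Q j) : ℝ) ≤ (⌈K₂ * (L : ℝ)⌉₊ : ℝ) :=
      le_trans h2 (Nat.le_ceil _)
    have h4 : Module.finrank k ↥(Q j) ≤ ⌈K₂ * (L : ℝ)⌉₊ := by exact_mod_cast h3
    rw [h1]
    exact le_trans h4 (le_max_right _ _)
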